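/- Let a, b, c, d > 0 and let x, y : ℝ → ℝ be differentiable functions with x(t) ≥ 0 and y(t) ≥ 0 for all t ≥ 0, satisfying x'(t) = a − b·x(t) − x(t)·y(t) and y'(t) = c − d·y(t) + x(t)·y(t) for all t ≥ 0. Then limsup_{t→∞} (x(t) + y(t)) ≤ (b+d)(a+c)/(bd). -/
import Mathlib


open Filter

/-- The triangle `{x ≥ 0, y ≥ 0, x + y ≤ (b+d)(a+c)/(bd)}` is a global attractor for
nonnegative solutions of the system `ẋ = a − bx − xy`, `ẏ = c − dy + xy`. -/
theorem stmt_0 (a b c d : ℝ) (ha : 0 < a) (hb : 0 < b) (hc : 0 < c) (hd : 0 < d)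
    (x y : ℝ → ℝ) (hx : Differentiable ℝ x) (hy : Differentiable ℝ y)
    (hxnn : ∀ t : ℝ, 0 ≤ t → 0 ≤ x t) (hynn : ∀ t : ℝ, 0 ≤ t → 0 ≤ y t)
    (hxd : ∀ t : ℝ, 0 ≤ t → deriv x t = a - b * x t - x t * y t)
    (hyd : ∀ t : ℝ, 0 ≤ t → deriv y t = c - d * y t + x t * y t) :
    limsup (fun t => x t + y t) atTop ≤ (b + d) * (a + c) / (b * d) := by
  set m : ℝ := min b d with hm
  have hm0 : 0 < m := lt_min hb hd
  set C : ℝ := (a + c) / m with hC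
  set s : ℝ → ℝ := fun t => x t + y t with hs
  have hsd : Differentiable ℝ s := hx.add hy
  -- derivative of s
  have hsderiv : ∀ t : ℝ, 0 ≤ t → deriv s t = (a + c) - b * x t - d * y t := by
    intro t ht
    have : deriv s t = deriv x t + deriv y t := by
      rw [hs]
      exact deriv_add (hx t) (hy t)
    rw [this, hxd t ht, hyd t ht]; ring
  -- key differential inequality
  have hineq : ∀ t : ℝ, 0 ≤ t → deriv s t + m * s t ≤ a + c := by
    intro t ht
    have h1 : m * x t ≤ b * x t := mul_le_mul_of_nonneg_right (min_le_left b d) (hxnn t ht)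
    have h2 : m * y t ≤ d * y t := mul_le_mul_of_nonneg_right (min_le_right b d) (hynn t ht)
    rw [hsderiv t ht]
    simp only [hs]
    nlinarith
  -- g t = (s t - C) * exp (m t) is antitone on [0, ∞)
  set g : ℝ → ℝ := fun t => (s t - C) * Real.exp (m * t) with hg
  have hgd : Differentiable ℝ g := by
    apply Differentiable.mul (hsd.sub_const C)
    exact (Real.differentiable_exp.comp (differentiable_id.const_mul m))
  have hgderiv : ∀ t : ℝ, 0 ≤ t → deriv g t ≤ 0 := by
    intro t ht
    have hd1 : HasDerivAt (fun t => s t - C) (deriv s t) t := by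
      simpa using ((hsd t).hasDerivAt.sub_const C)
    have hd2 : HasDerivAt (fun t => Real.exp (m * t)) (Real.exp (m * t) * m) t := by
      have := ((hasDerivAt_id t).const_mul m).exp
      simpa using this
    have hg' : HasDerivAt g (deriv s t * Real.exp (m * t) + (s t - C) * (Real.exp (m * t) * m)) t :=
      hd1.mul hd2
    rw [hg'.deriv]
    have hexp : 0 < Real.exp (m * t) := Real.exp_pos _
    have key : deriv s t + m * (s t - C) ≤ 0 := by
      have := hineq t ht
      have hmC : m * C = a + c := by
        rw [hC]; field_simp
      nlinarith
    nlinarith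
  have hanti : AntitoneOn g (Set.Ici (0 : ℝ)) := by
    apply antitoneOn_of_deriv_nonpos (convex_Ici 0) hgd.continuous.continuousOn
      hgd.differentiableOn
    intro t ht
    rw [interior_Ici] at ht
    exact hgderiv t (le_of_lt ht)
  -- hence s t ≤ C + (s 0 - C) * exp (-(m t)) for t ≥ 0
  have hbound : ∀ t : ℝ, 0 ≤ t → s t ≤ C + (s 0 - C) * Real.exp (-(m * t)) := by
    intro t ht
    have := hanti (Set.self_mem_Ici) ht ht
    simp only [hg, mul_zero, Real.exp_zero, mul_one] at this
    have hid : Real.exp (m * t) * Real.exp (-(m * t)) = 1 := by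
      rw [← Real.exp_add]; simp
    have e1 : s t - C ≤ (s 0 - C) * Real.exp (-(m * t)) := by
      have h3 := mul_le_mul_of_nonneg_right this (Real.exp_pos (-(m * t))).le
      calc s t - C = (s t - C) * Real.exp (m * t) * Real.exp (-(m * t)) := by
            rw [mul_assoc, hid, mul_one]
        _ ≤ (s 0 - C) * Real.exp (-(m * t)) := h3
    linarith
  -- the bounding function tends to C
  set u : ℝ → ℝ := fun t => C + (s 0 - C) * Real.exp (-(m * t)) with hu
  have hT : Tendsto u atTop (nhds C) := by
    have h2 : Tendsto (fun t : ℝ => Real.exp (-(m * t))) atTop (nhds 0) := by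
      have := Real.tendsto_exp_neg_atTop_nhds_zero.comp (tendsto_id.const_mul_atTop hm0)
      exact this
    have h3 : Tendsto u atTop (nhds (C + (s 0 - C) * 0)) :=
      tendsto_const_nhds.add (tendsto_const_nhds.mul h2)
    simpa using h3
  have hsu : ∀ᶠ t in atTop, s t ≤ u t := by
    filter_upwards [eventually_ge_atTop (0 : ℝ)] with t ht using hbound t ht
  have hlim : limsup s atTop ≤ C := by
    have h1 : limsup s atTop ≤ limsup u atTop := by
      have hcob : IsCoboundedUnder (· ≤ ·) atTop s := by
        apply isCoboundedUnder_le_of_eventually_le atTop (x := (0 : ℝ))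
        filter_upwards [eventually_ge_atTop (0 : ℝ)] with t ht
        exact add_nonneg (hxnn t ht) (hynn t ht)
      exact limsup_le_limsup hsu hcob hT.isBoundedUnder_le
    rw [hT.limsup_eq] at h1
    exact h1
  refine hlim.trans ?_
  rw [hC, div_le_div_iff₀ hm0 (mul_pos hb hd)]
  have : b * d ≤ (b + d) * m := by
    rcases min_le_iff.mp (le_refl m) with h | h
    · rcases le_total b d with hbd | hbd
      · have : m = b := min_eq_left hbd
        rw [this]; nlinarith
      · have : m = d := min_eq_right hbd
        rw [this]; nlinarith
    · rcases le_total b d with hbd | hbd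
      · have : m = b := min_eq_left hbd
        rw [this]; nlinarith
      · have : m = d := min_eq_right hbd
        rw [this]; nlinarith
  nlinarith [add_pos ha hc]
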